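/- Assume N = 2. Then (i) an element ω ∈ Ω satisfies dω = 0 if and only if ω ∼ b₀₀ + ψ₁b₁₀ + χ₁b₀₁ + (c̃₃(ψ₁χ₂ + χ₁ψ₂) − c̃₁χ₁χ₂ − c̃₂ψ₁ψ₂)b + (c̃₃(ψ₁χ₁ − ψ₂χ₂) − ½c̃₁(χ₁² − χ₂²) − ½c̃₂(ψ₁² − ψ₂²))a₁₁ for some polynomials b₀₀, b₁₀, b₀₁, b, a₁₁ ∈ ℂ[ψ₂, χ₂]; and (ii) such a combination is ∼ 0 if and only if b₀₀ = b = a₁₁ = 0 and ψ₁b₁₀ + χ₁b₀₁ = (ψ₁χ₂ − χ₁ψ₂)(ψ₂d₁₀ − χ₂d₀₁) for some polynomials d₁₀, d₀₁ ∈ ℂ[ψ₂, χ₂]. -/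

import Mathlib

/-!
D = 3 supersymmetry algebra cohomology.
`R3 N = ℂ[ψ₁,…,ψ_N, χ₁,…,χ_N]`, `Om3 N` is the free module with basis
`{1, c̃₁, c̃₂, c̃₃, c̃₁c̃₂, c̃₁c̃₃, c̃₂c̃₃, c̃₁c̃₂c̃₃}` (components 0,…,7), and
`d3` is the odd superderivation with `dc̃₁ = P`, `dc̃₂ = Q`, `dc̃₃ = S`, `d|_R = 0`.
-/

open MvPolynomial

noncomputable section

/-- The polynomial ring `ℂ[ψ₁,…,ψ_N, χ₁,…,χ_N]`; `Sum.inl i ↦ ψᵢ`, `Sum.inr i ↦ χᵢ`. -/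
abbrev R3 (N : ℕ) : Type := MvPolynomial (Fin N ⊕ Fin N) ℂ

/-- `Ω`: free `R3`-module with basis
`{1, c̃₁, c̃₂, c̃₃, c̃₁c̃₂, c̃₁c̃₃, c̃₂c̃₃, c̃₁c̃₂c̃₃}` (components 0,…,7). -/
abbrev Om3 (N : ℕ) : Type := Fin 8 → R3 N

/-- The ghost `ψᵢ`. -/
def ψ {N : ℕ} (i : Fin N) : R3 N := X (Sum.inl i)

/-- The ghost `χᵢ`. -/
def χ {N : ℕ} (i : Fin N) : R3 N := X (Sum.inr i)

/-- `P = Σ ψᵢ²`. -/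
def PP (N : ℕ) : R3 N := ∑ i, ψ i ^ 2

/-- `Q = Σ χᵢ²`. -/
def QQ (N : ℕ) : R3 N := ∑ i, χ i ^ 2

/-- `S = Σ ψᵢχᵢ`. -/
def SS (N : ℕ) : R3 N := ∑ i, ψ i * χ i

/-- The differential: the unique R-linear odd superderivation with
`dc̃₁ = P`, `dc̃₂ = Q`, `dc̃₃ = S` and `d|_R = 0`, written out in components:
`d(ω₀ + c̃₁ω₁ + c̃₂ω₂ + c̃₃ω₃ + c̃₁c̃₂ω₄ + c̃₁c̃₃ω₅ + c̃₂c̃₃ω₆ + c̃₁c̃₂c̃₃ω₇)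
 = Pω₁ + Qω₂ + Sω₃ + (Pc̃₂ − Qc̃₁)ω₄ + (Pc̃₃ − Sc̃₁)ω₅ + (Qc̃₃ − Sc̃₂)ω₆
   + (Pc̃₂c̃₃ − Qc̃₁c̃₃ + Sc̃₁c̃₂)ω₇`. -/
def d3 {N : ℕ} (ω : Om3 N) : Om3 N :=
  ![PP N * ω 1 + QQ N * ω 2 + SS N * ω 3,
    -(QQ N * ω 4) - SS N * ω 5,
    PP N * ω 4 - SS N * ω 6,
    PP N * ω 5 + QQ N * ω 6,
    SS N * ω 7,
    -(QQ N * ω 7),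
    PP N * ω 7,
    0]

/-- Embedding of `R` into `Ω` (coefficient of the basis element `1`). -/
def ofR3 {N : ℕ} (r : R3 N) : Om3 N := ![r, 0, 0, 0, 0, 0, 0, 0]

/-- `ω ∼ ω'` iff `ω − ω' = dρ` for some `ρ`. -/
def Equiv3 {N : ℕ} (ω ω' : Om3 N) : Prop := ∃ ρ, ω - ω' = d3 ρ

/-- The subring `ℂ[ψ₂, χ₂]` of `R3 2`. -/
def coefRing2 : Subalgebra ℂ (R3 2) :=
  MvPolynomial.supported ℂ ({Sum.inl 1, Sum.inr 1} : Set (Fin 2 ⊕ Fin 2))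

open Complex

namespace S7
lemma PP_eq : PP 2 = ψ 0 ^ 2 + ψ 1 ^ 2 := by simp [PP, Fin.sum_univ_two]
lemma QQ_eq : QQ 2 = χ 0 ^ 2 + χ 1 ^ 2 := by simp [QQ, Fin.sum_univ_two]
lemma SS_eq : SS 2 = ψ 0 * χ 0 + ψ 1 * χ 1 := by simp [SS, Fin.sum_univ_two]

lemma mem_psi1 : ψ (1 : Fin 2) ∈ coefRing2 := by
  apply Algebra.subset_adjoin; exact ⟨Sum.inl 1, by simp, rfl⟩
lemma mem_chi1 : χ (1 : Fin 2) ∈ coefRing2 := by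
  apply Algebra.subset_adjoin; exact ⟨Sum.inr 1, by simp, rfl⟩
lemma mem_C (c : ℂ) : (C c : R3 2) ∈ coefRing2 := by
  simpa [algebraMap_eq] using Subalgebra.algebraMap_mem coefRing2 c

/-! ### Substitution homomorphisms -/

/-- `E s t`: substitution ψ₀ ↦ s·ψ₁, χ₀ ↦ t·χ₁. -/
def E (s t : ℂ) : R3 2 →ₐ[ℂ] R3 2 :=
  aeval fun j => match j with
    | Sum.inl 0 => C s * X (Sum.inl 1)
    | Sum.inr 0 => C t * X (Sum.inr 1)
    | j => X j

@[simp] lemma E_ψ0 (s t : ℂ) : E s t (ψ 0) = C s * ψ 1 := by simp [E, ψ, aeval_X]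
@[simp] lemma E_ψ1 (s t : ℂ) : E s t (ψ 1) = ψ 1 := by simp [E, ψ, aeval_X]
@[simp] lemma E_χ0 (s t : ℂ) : E s t (χ 0) = C t * χ 1 := by simp [E, χ, aeval_X]
@[simp] lemma E_χ1 (s t : ℂ) : E s t (χ 1) = χ 1 := by simp [E, χ, aeval_X]

lemma E_fix {s t : ℂ} {f : R3 2} (hf : f ∈ coefRing2) : E s t f = f := by
  induction hf using Algebra.adjoin_induction with
  | mem x hx =>
      obtain ⟨j, hj, rfl⟩ := hx
      rcases hj with rfl | rfl
      · exact E_ψ1 s t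
      · exact E_χ1 s t
  | algebraMap r => simp [E]
  | add x y hx hy ihx ihy => rw [map_add, ihx, ihy]
  | mul x y hx hy ihx ihy => rw [map_mul, ihx, ihy]

lemma E_P {s : ℂ} (hs : s * s = -1) (t : ℂ) : E s t (PP 2) = 0 := by
  rw [PP_eq, map_add, map_pow, map_pow, E_ψ0, E_ψ1]
  have : (C s : R3 2) * C s = -1 := by rw [← map_mul, hs, map_neg, map_one]
  linear_combination (ψ (1:Fin 2))^2 * this

lemma E_Q {t : ℂ} (ht : t * t = -1) (s : ℂ) : E s t (QQ 2) = 0 := by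
  rw [QQ_eq, map_add, map_pow, map_pow, E_χ0, E_χ1]
  have : (C t : R3 2) * C t = -1 := by rw [← map_mul, ht, map_neg, map_one]
  linear_combination (χ (1:Fin 2))^2 * this

lemma E_S {s t : ℂ} (hst : s * t = -1) : E s t (SS 2) = 0 := by
  rw [SS_eq, map_add, map_mul, map_mul, E_ψ0, E_ψ1, E_χ0, E_χ1]
  have : (C s : R3 2) * C t = -1 := by rw [← map_mul, hst, map_neg, map_one]
  linear_combination (ψ (1:Fin 2) * χ (1:Fin 2)) * this

/-- projection killing ψ₀, χ₀ -/
def π : R3 2 →ₐ[ℂ] R3 2 :=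
  aeval fun j => match j with
    | Sum.inl 0 => 0
    | Sum.inr 0 => 0
    | j => X j

@[simp] lemma π_ψ1 : π (ψ 1) = ψ 1 := by simp [π, ψ, aeval_X]
@[simp] lemma π_χ1 : π (χ 1) = χ 1 := by simp [π, χ, aeval_X]

lemma π_fix {f : R3 2} (hf : f ∈ coefRing2) : π f = f := by
  induction hf using Algebra.adjoin_induction with
  | mem x hx =>
      obtain ⟨j, hj, rfl⟩ := hx
      rcases hj with rfl | rfl
      · exact π_ψ1
      · exact π_χ1
  | algebraMap r => simp [π]
  | add x y hx hy ihx ihy => rw [map_add, ihx, ihy]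
  | mul x y hx hy ihx ihy => rw [map_mul, ihx, ihy]

lemma π_mem (f : R3 2) : π f ∈ coefRing2 := by
  induction f using MvPolynomial.induction_on with
  | C a => simpa [π] using Subalgebra.algebraMap_mem coefRing2 a
  | add p q hp hq => rw [map_add]; exact add_mem hp hq
  | mul_X p j hp =>
      rw [map_mul]
      refine mul_mem hp ?_
      rcases j with i | i <;> fin_cases i
      · simp [π]
      · simpa [π, aeval_X, ψ] using mem_psi1
      · simp [π]
      · simpa [π, aeval_X, χ] using mem_chi1

lemma mem_of_psi1_mul {c k : R3 2} (hc : c ∈ coefRing2) (h : c = ψ 1 * k) :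
    k ∈ coefRing2 := by
  have h2 : ψ 1 * π k = ψ 1 * k := by
    have := π_fix hc
    rw [h] at this
    rw [map_mul, π_ψ1] at this
    rw [this, ← h]
  have : π k = k := mul_left_cancel₀ (by exact X_ne_zero _) h2
  rw [← this]; exact π_mem k

/-- decomposition of an element of coefRing2 -/
lemma decompA {h : R3 2} (hh : h ∈ coefRing2) :
    ∃ c : ℂ, ∃ h₁ h₂ : R3 2, h₁ ∈ coefRing2 ∧ h₂ ∈ coefRing2 ∧
      h = C c + ψ 1 * h₁ + χ 1 * h₂ := by
  induction hh using Algebra.adjoin_induction with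
  | mem x hx =>
      obtain ⟨j, hj, rfl⟩ := hx
      rcases hj with rfl | rfl
      · exact ⟨0, 1, 0, one_mem _, zero_mem _, by simp [ψ]⟩
      · exact ⟨0, 0, 1, zero_mem _, one_mem _, by simp [χ]⟩
  | algebraMap r => exact ⟨r, 0, 0, zero_mem _, zero_mem _, by simp [algebraMap_eq]⟩
  | add x y hx hy ihx ihy =>
      obtain ⟨c, h₁, h₂, m1, m2, rfl⟩ := ihx
      obtain ⟨c', h₁', h₂', m1', m2', rfl⟩ := ihy
      exact ⟨c + c', h₁ + h₁', h₂ + h₂', add_mem m1 m1', add_mem m2 m2',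
        by push_cast [map_add]; ring⟩
  | mul x y hx hy ihx ihy =>
      obtain ⟨c, h₁, h₂, m1, m2, rfl⟩ := ihx
      obtain ⟨c', h₁', h₂', m1', m2', rfl⟩ := ihy
      have hw : C c' + ψ 1 * h₁' + χ 1 * h₂' ∈ coefRing2 :=
        add_mem (add_mem (mem_C c') (mul_mem mem_psi1 m1')) (mul_mem mem_chi1 m2')
      exact ⟨c * c', C c * h₁' + h₁ * (C c' + ψ 1 * h₁' + χ 1 * h₂'),
        C c * h₂' + h₂ * (C c' + ψ 1 * h₁' + χ 1 * h₂'),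
        add_mem (mul_mem (mem_C c) m1') (mul_mem m1 hw),
        add_mem (mul_mem (mem_C c) m2') (mul_mem m2 hw), by push_cast [map_mul]; ring⟩

/-! ### T ∉ (P,Q,S) -/

lemma T_not_in (c : ℂ) (ρ₁ ρ₂ ρ₃ : R3 2)
    (h : C c * (ψ 0 * χ 1 - ψ 1 * χ 0) =
      ρ₁ * ψ 0 * ψ 0 + ρ₁ * ψ 1 * ψ 1 + ρ₂ * χ 0 * χ 0 + ρ₂ * χ 1 * χ 1
        + ρ₃ * ψ 0 * χ 0 + ρ₃ * ψ 1 * χ 1) : c = 0 := by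
  have h' : (C c * ψ 0) * χ 1 - (C c * ψ 1) * χ 0 =
      (ρ₁ * ψ 0) * ψ 0 + (ρ₁ * ψ 1) * ψ 1 + (ρ₂ * χ 0) * χ 0 + (ρ₂ * χ 1) * χ 1
        + (ρ₃ * ψ 0) * χ 0 + (ρ₃ * ψ 1) * χ 1 := by linear_combination h
  have h2 := congrArg (coeff (Finsupp.single (Sum.inl 0) 1 + Finsupp.single (Sum.inr 1) 1)) h'
  simp only [ψ, χ, coeff_mul_X', coeff_sub, coeff_add] at h2
  norm_num [Finsupp.mem_support_iff, Finsupp.single_apply, coeff_C_mul, coeff_X',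
    Finsupp.ext_iff] at h2
  simp at h2; exact h2

/-! ### Normal form -/

lemma nf_exists (f : R3 2) : ∃ b00 b10 b01 f11 α β : R3 2,
    b00 ∈ coefRing2 ∧ b10 ∈ coefRing2 ∧ b01 ∈ coefRing2 ∧ f11 ∈ coefRing2 ∧
    f = b00 + ψ 0 * b10 + χ 0 * b01 + ψ 0 * χ 0 * f11 + PP 2 * α + QQ 2 * β := by
  induction f using MvPolynomial.induction_on with
  | C a =>
      exact ⟨C a, 0, 0, 0, 0, 0, mem_C a, zero_mem _, zero_mem _, zero_mem _, by ring⟩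
  | add p q hp hq =>
      obtain ⟨b00, b10, b01, f11, α, β, m1, m2, m3, m4, rfl⟩ := hp
      obtain ⟨c00, c10, c01, g11, α', β', n1, n2, n3, n4, rfl⟩ := hq
      exact ⟨b00 + c00, b10 + c10, b01 + c01, f11 + g11, α + α', β + β',
        add_mem m1 n1, add_mem m2 n2, add_mem m3 n3, add_mem m4 n4, by ring⟩
  | mul_X p n hp =>
      obtain ⟨b00, b10, b01, f11, α, β, m1, m2, m3, m4, rfl⟩ := hp
      rcases n with i | i <;> fin_cases i
      · refine ⟨-(ψ 1 ^ 2 * b10), b00, -(ψ 1 ^ 2 * f11), b01,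
          b10 + χ 0 * f11 + ψ 0 * α, ψ 0 * β,
          neg_mem (mul_mem (pow_mem mem_psi1 2) m2), m1,
          neg_mem (mul_mem (pow_mem mem_psi1 2) m4), m3, ?_⟩
        show _ * ψ 0 = _
        rw [PP_eq, QQ_eq]; ring
      · refine ⟨ψ 1 * b00, ψ 1 * b10, ψ 1 * b01, ψ 1 * f11, ψ 1 * α, ψ 1 * β,
          mul_mem mem_psi1 m1, mul_mem mem_psi1 m2, mul_mem mem_psi1 m3,
          mul_mem mem_psi1 m4, ?_⟩
        show _ * ψ 1 = _
        ring
      · refine ⟨-(χ 1 ^ 2 * b01), -(χ 1 ^ 2 * f11), b00, b10,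
          χ 0 * α, b01 + ψ 0 * f11 + χ 0 * β,
          neg_mem (mul_mem (pow_mem mem_chi1 2) m3),
          neg_mem (mul_mem (pow_mem mem_chi1 2) m4), m1, m2, ?_⟩
        show _ * χ 0 = _
        rw [PP_eq, QQ_eq]; ring
      · refine ⟨χ 1 * b00, χ 1 * b10, χ 1 * b01, χ 1 * f11, χ 1 * α, χ 1 * β,
          mul_mem mem_chi1 m1, mul_mem mem_chi1 m2, mul_mem mem_chi1 m3,
          mul_mem mem_chi1 m4, ?_⟩
        show _ * χ 1 = _
        ring

lemma nf_unique {f00 f10 f01 f11 α β : R3 2}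
    (m1 : f00 ∈ coefRing2) (m2 : f10 ∈ coefRing2) (m3 : f01 ∈ coefRing2)
    (m4 : f11 ∈ coefRing2)
    (h : f00 + ψ 0 * f10 + χ 0 * f01 + ψ 0 * χ 0 * f11 = PP 2 * α + QQ 2 * β) :
    f00 = 0 ∧ f10 = 0 ∧ f01 = 0 ∧ f11 = 0 := by
  have key : ∀ s t : ℂ, s * s = -1 → t * t = -1 →
      f00 + C s * ψ 1 * f10 + C t * χ 1 * f01 + C s * C t * (ψ 1 * χ 1) * f11 = 0 := by
    intro s t hs ht
    have h2 := congrArg (E s t) h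
    simp only [map_add, map_mul, E_P hs, E_Q ht, E_fix m1, E_fix m2, E_fix m3, E_fix m4,
      E_ψ0, E_χ0, zero_mul, add_zero, zero_add] at h2
    linear_combination h2
  have hII : (I : ℂ) * I = -1 := Complex.I_mul_I
  have hNN : (-I : ℂ) * (-I) = -1 := by rw [neg_mul_neg, Complex.I_mul_I]
  have e1 := key I I hII hII
  have e2 := key I (-I) hII hNN
  have e3 := key (-I) I hNN hII
  have e4 := key (-I) (-I) hNN hNN
  have hC : (C (-I) : R3 2) = - C I := by rw [map_neg]
  rw [hC] at e2 e3 e4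
  have hI0 : (C I : R3 2) ≠ 0 := by
    simp only [ne_eq, C_eq_zero]
    exact Complex.I_ne_zero
  have h40 : (4 : R3 2) ≠ 0 := by norm_num
  have hψ : (ψ 1 : R3 2) ≠ 0 := X_ne_zero _
  have hχ : (χ 1 : R3 2) ≠ 0 := X_ne_zero _
  refine ⟨?_, ?_, ?_, ?_⟩
  · have : f00 * 4 = 0 := by linear_combination e1 + e2 + e3 + e4
    exact (mul_eq_zero.mp this).resolve_right h40
  · have : C I * (ψ 1 * f10) * 4 = 0 := by linear_combination e1 + e2 - e3 - e4
    have := (mul_eq_zero.mp this).resolve_right h40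
    have := (mul_eq_zero.mp this).resolve_left hI0
    exact (mul_eq_zero.mp this).resolve_left hψ
  · have : C I * (χ 1 * f01) * 4 = 0 := by linear_combination e1 - e2 + e3 - e4
    have := (mul_eq_zero.mp this).resolve_right h40
    have := (mul_eq_zero.mp this).resolve_left hI0
    exact (mul_eq_zero.mp this).resolve_left hχ
  · have : C I * C I * (ψ 1 * (χ 1 * f11)) * 4 = 0 := by
      linear_combination e1 - e2 - e3 + e4
    have := (mul_eq_zero.mp this).resolve_right h40
    have := (mul_eq_zero.mp this).resolve_left (mul_ne_zero hI0 hI0)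
    have := (mul_eq_zero.mp this).resolve_left hψ
    exact (mul_eq_zero.mp this).resolve_left hχ

/-! ### Primes and divisibility -/

lemma prime_X_mv {σ : Type} (i : σ) : Prime (X i : MvPolynomial σ ℂ) := by
  have h1 : (X i : MvPolynomial σ ℂ)
      = rename (Subtype.val : ({i} : Set σ) → σ) (X ⟨i, rfl⟩) := by simp
  rw [h1, prime_rename_iff]
  rw [← MulEquiv.prime_iff (renameEquiv ℂ (Equiv.ofUnique ({i} : Set σ) PUnit.{1})).toMulEquiv]
  have h2 : (renameEquiv ℂ (Equiv.ofUnique ({i} : Set σ) PUnit.{1})).toMulEquiv (X ⟨i, rfl⟩)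
      = X PUnit.unit := by
    show (renameEquiv ℂ _) (X _) = _
    simp
  rw [h2, ← MulEquiv.prime_iff (pUnitAlgEquiv ℂ).toMulEquiv]
  have h3 : (pUnitAlgEquiv ℂ).toMulEquiv (X PUnit.unit) = Polynomial.X := by
    show (pUnitAlgEquiv ℂ) (X PUnit.unit) = Polynomial.X
    simp
  rw [h3]
  exact Polynomial.prime_X

def τfun (c : ℂ) (j : Fin 2 ⊕ Fin 2) : R3 2 :=
  if j = Sum.inl 0 then X (Sum.inl 0) + C c * X (Sum.inl 1) else X j

def τ (c : ℂ) : R3 2 ≃ₐ[ℂ] R3 2 :=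
  AlgEquiv.ofAlgHom (aeval (τfun c)) (aeval (τfun (-c)))
    (by apply MvPolynomial.algHom_ext; intro j
        rcases j with i | i <;> fin_cases i <;> simp [τfun, aeval_X] <;> ring)
    (by apply MvPolynomial.algHom_ext; intro j
        rcases j with i | i <;> fin_cases i <;> simp [τfun, aeval_X] <;> ring)

lemma τ_X0 (c : ℂ) : τ c (X (Sum.inl 0)) = ψ 0 + C c * ψ 1 := by
  show aeval (τfun c) (X (Sum.inl 0)) = _
  simp [τfun, aeval_X, ψ]

lemma prime_u : Prime (ψ 0 + C I * ψ 1 : R3 2) := by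
  rw [← τ_X0]
  exact ((MulEquiv.prime_iff (τ I).toMulEquiv).mpr (prime_X_mv _))

lemma prime_v : Prime (ψ 0 - C I * ψ 1 : R3 2) := by
  have : (ψ 0 - C I * ψ 1 : R3 2) = ψ 0 + C (-I) * ψ 1 := by rw [map_neg]; ring
  rw [this, ← τ_X0]
  exact ((MulEquiv.prime_iff (τ (-I)).toMulEquiv).mpr (prime_X_mv _))

lemma not_dvd_of_eval {f g : R3 2} (x : Fin 2 ⊕ Fin 2 → ℂ)
    (hf : eval x f = 0) (hg : eval x g ≠ 0) : ¬ f ∣ g := by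
  rintro ⟨c, rfl⟩
  exact hg (by rw [map_mul, hf, zero_mul])

def x1 : Fin 2 ⊕ Fin 2 → ℂ := Sum.elim ![-I, 1] ![1, 0]
def x2 : Fin 2 ⊕ Fin 2 → ℂ := Sum.elim ![I, 1] ![1, 0]

lemma u_not_dvd_S : ¬ (ψ 0 + C I * ψ 1 : R3 2) ∣ SS 2 := by
  apply not_dvd_of_eval x1 <;> simp [SS_eq, ψ, χ, x1, I_ne_zero]
lemma v_not_dvd_S : ¬ (ψ 0 - C I * ψ 1 : R3 2) ∣ SS 2 := by
  apply not_dvd_of_eval x2 <;> simp [SS_eq, ψ, χ, x2, I_ne_zero]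
lemma u_not_dvd_Q : ¬ (ψ 0 + C I * ψ 1 : R3 2) ∣ QQ 2 := by
  apply not_dvd_of_eval x1 <;> simp [QQ_eq, ψ, χ, x1]
lemma v_not_dvd_Q : ¬ (ψ 0 - C I * ψ 1 : R3 2) ∣ QQ 2 := by
  apply not_dvd_of_eval x2 <;> simp [QQ_eq, ψ, χ, x2]
lemma v_not_dvd_u : ¬ (ψ 0 - C I * ψ 1 : R3 2) ∣ (ψ 0 + C I * ψ 1) := by
  apply not_dvd_of_eval x2 <;> simp [ψ, x2, I_ne_zero]

lemma uv_eq : (ψ 0 + C I * ψ 1 : R3 2) * (ψ 0 - C I * ψ 1) = PP 2 := by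
  have hI : (C I : R3 2) * C I = -1 := by rw [← map_mul, I_mul_I, map_neg, map_one]
  rw [PP_eq]
  linear_combination (-(ψ (1:Fin 2) * ψ 1)) * hI

lemma PP_ne_zero : (PP 2 : R3 2) ≠ 0 := by
  intro h
  have := congrArg (eval (Sum.elim ![1, 0] ![0, 0])) h
  rw [PP_eq] at this
  simp [ψ] at this

lemma exists_of_P_dvd {f a c : R3 2}
    (hu : ¬ (ψ 0 + C I * ψ 1 : R3 2) ∣ f) (hv : ¬ (ψ 0 - C I * ψ 1 : R3 2) ∣ f)
    (h : PP 2 * a = f * c) : ∃ t, c = PP 2 * t := by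
  have hudvd : (ψ 0 + C I * ψ 1 : R3 2) ∣ f * c :=
    ⟨(ψ 0 - C I * ψ 1) * a, by rw [← h, ← uv_eq]; ring⟩
  obtain ⟨c1, rfl⟩ := (prime_u.2.2 _ _ hudvd).resolve_left hu
  have hvdvd : (ψ 0 - C I * ψ 1 : R3 2) ∣ f * ((ψ 0 + C I * ψ 1) * c1) :=
    ⟨(ψ 0 + C I * ψ 1) * a, by rw [← h, ← uv_eq]; ring⟩
  have h2 := (prime_v.2.2 _ _ hvdvd).resolve_left hv
  have h3 := (prime_v.2.2 _ _ h2).resolve_left v_not_dvd_u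
  obtain ⟨t, rfl⟩ := h3
  exact ⟨t, by rw [← uv_eq]; ring⟩

lemma psi1_not_dvd_chi1 : ¬ (ψ 1 : R3 2) ∣ χ 1 := by
  apply not_dvd_of_eval (Sum.elim ![0, 0] ![0, 1]) <;> simp [ψ, χ]

lemma div_pair {b c : R3 2} (hb : b ∈ coefRing2) (hc : c ∈ coefRing2)
    (h : ψ 1 * b = χ 1 * c) :
    ∃ k, k ∈ coefRing2 ∧ b = χ 1 * k ∧ c = ψ 1 * k := by
  have hdvd : (ψ 1 : R3 2) ∣ χ 1 * c := ⟨b, h.symm⟩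
  have h2 := ((prime_X_mv (Sum.inl 1 : Fin 2 ⊕ Fin 2)).2.2 _ _ hdvd).resolve_left
    psi1_not_dvd_chi1
  obtain ⟨k, hk⟩ := h2
  have hk' : c = ψ 1 * k := hk
  refine ⟨k, mem_of_psi1_mul hc hk', ?_, hk'⟩
  have : ψ 1 * b = ψ 1 * (χ 1 * k) := by rw [h, hk']; ring
  exact mul_left_cancel₀ (X_ne_zero _) this

/-! ### Classification lemmas -/

lemma two_ne_zero' : (2 : R3 2) ≠ 0 := by norm_num

lemma hhalf : (C (1/2 : ℂ) : R3 2) * 2 = 1 := by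
  rw [show (2 : R3 2) = C (2 : ℂ) from (map_ofNat (C : ℂ →+* R3 2) 2).symm, ← map_mul]
  norm_num

lemma comp456_classify {ω4 ω5 ω6 : R3 2}
    (h2 : PP 2 * ω4 - SS 2 * ω6 = 0) (h3 : PP 2 * ω5 + QQ 2 * ω6 = 0) :
    ∃ t, ω4 = SS 2 * t ∧ ω5 = -(QQ 2 * t) ∧ ω6 = PP 2 * t := by
  obtain ⟨t, rfl⟩ := exists_of_P_dvd u_not_dvd_S v_not_dvd_S
    (show PP 2 * ω4 = SS 2 * ω6 by linear_combination h2)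
  refine ⟨t, ?_, ?_, rfl⟩
  · apply mul_left_cancel₀ PP_ne_zero
    linear_combination h2
  · apply mul_left_cancel₀ PP_ne_zero
    linear_combination h3

lemma comp0_classify {b00 b10 b01 ρ₁ ρ₂ ρ₃ : R3 2}
    (m0 : b00 ∈ coefRing2) (m1 : b10 ∈ coefRing2) (m2 : b01 ∈ coefRing2)
    (h : b00 + ψ 0 * b10 + χ 0 * b01 = PP 2 * ρ₁ + QQ 2 * ρ₂ + SS 2 * ρ₃) :
    b00 = 0 ∧ ∃ d10, d10 ∈ coefRing2 ∧ ∃ d01, d01 ∈ coefRing2 ∧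
      ψ 0 * b10 + χ 0 * b01 = (ψ 0 * χ 1 - χ 0 * ψ 1) * (ψ 1 * d10 - χ 1 * d01) := by
  have hII : (I : ℂ) * I = -1 := Complex.I_mul_I
  have hNN : (-I : ℂ) * (-I) = -1 := by rw [neg_mul_neg]; exact hII
  have e1 : b00 + C I * ψ 1 * b10 + C I * χ 1 * b01 = 0 := by
    have h2 := congrArg (E I I) h
    simp only [map_add, map_mul, E_P hII, E_Q hII, E_S hII, E_fix m0, E_fix m1, E_fix m2,
      E_ψ0, E_χ0, zero_mul, add_zero, zero_add] at h2
    linear_combination h2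
  have e2 : b00 + C (-I) * ψ 1 * b10 + C (-I) * χ 1 * b01 = 0 := by
    have h2 := congrArg (E (-I) (-I)) h
    simp only [map_add, map_mul, E_P hNN, E_Q hNN, E_S hNN, E_fix m0, E_fix m1, E_fix m2,
      E_ψ0, E_χ0, zero_mul, add_zero, zero_add] at h2
    linear_combination h2
  have hCm : (C (-I) : R3 2) = - C I := by rw [map_neg]
  rw [hCm] at e2
  have hI0 : (C I : R3 2) ≠ 0 := by
    simp only [ne_eq, C_eq_zero]; exact Complex.I_ne_zero
  have hb00 : b00 = 0 := by
    have : b00 * 2 = 0 := by linear_combination e1 + e2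
    exact (mul_eq_zero.mp this).resolve_right two_ne_zero'
  have hsum : ψ 1 * b10 = χ 1 * (-b01) := by
    have h5 : C I * ((ψ 1 * b10 + χ 1 * b01) * 2) = 0 := by linear_combination e1 - e2
    have h6 := (mul_eq_zero.mp h5).resolve_left hI0
    have h7 := (mul_eq_zero.mp h6).resolve_right two_ne_zero'
    linear_combination h7
  obtain ⟨k, hkmem, hb10, hb01'⟩ := div_pair m1 (neg_mem m2) hsum
  obtain ⟨c, k1, k2, mk1, mk2, hk⟩ := decompA hkmem
  have hT : (ψ 0 * χ 1 - χ 0 * ψ 1) * k = PP 2 * ρ₁ + QQ 2 * ρ₂ + SS 2 * ρ₃ := by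
    linear_combination h - hb00 - ψ 0 * hb10 + χ 0 * hb01'
  rw [PP_eq, QQ_eq, SS_eq] at hT
  have hc : c = 0 := by
    apply T_not_in c (ρ₁ + χ 0 * k1) (ρ₂ - ψ 0 * k2) (ρ₃ - ψ 0 * k1 + χ 0 * k2)
    linear_combination hT - (ψ 0 * χ 1 - χ 0 * ψ 1) * hk
  have hCc : (C c : R3 2) = 0 := by rw [hc, map_zero]
  refine ⟨hb00, k1, mk1, -k2, neg_mem mk2, ?_⟩
  linear_combination ψ 0 * hb10 - χ 0 * hb01' + (ψ 0 * χ 1 - χ 0 * ψ 1) * hk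
    + (ψ 0 * χ 1 - χ 0 * ψ 1) * hCc

lemma comp123_classify {ω₁ ω₂ ω₃ : R3 2}
    (h : PP 2 * ω₁ + QQ 2 * ω₂ + SS 2 * ω₃ = 0) :
    ∃ b a11 ρ₄ ρ₅ ρ₆ : R3 2, b ∈ coefRing2 ∧ a11 ∈ coefRing2 ∧
      ω₁ = -(χ 0 * χ 1 * b) - C (1/2 : ℂ) * (χ 0 ^ 2 - χ 1 ^ 2) * a11
            + (-(QQ 2 * ρ₄) - SS 2 * ρ₅) ∧
      ω₂ = -(ψ 0 * ψ 1 * b) - C (1/2 : ℂ) * (ψ 0 ^ 2 - ψ 1 ^ 2) * a11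
            + (PP 2 * ρ₄ - SS 2 * ρ₆) ∧
      ω₃ = (ψ 0 * χ 1 + χ 0 * ψ 1) * b + (ψ 0 * χ 0 - ψ 1 * χ 1) * a11
            + (PP 2 * ρ₅ + QQ 2 * ρ₆) := by
  obtain ⟨a, b', c', e, α, β, ma, mb, mc, me, hω₃⟩ := nf_exists ω₃
  have hid : SS 2 * (a + ψ 0 * b' + χ 0 * c' + ψ 0 * χ 0 * e)
      = (ψ 1 * χ 1 * a + ψ 1^2 * χ 1^2 * e) + ψ 0 * (ψ 1 * χ 1 * b' - χ 1^2 * c')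
        + χ 0 * (ψ 1 * χ 1 * c' - ψ 1^2 * b') + ψ 0 * χ 0 * (a + ψ 1 * χ 1 * e)
        + PP 2 * (χ 0 * b' + (QQ 2 - χ 1^2) * e) + QQ 2 * (ψ 0 * c' - ψ 1^2 * e) := by
    rw [PP_eq, QQ_eq, SS_eq]; ring
  have hnf : (ψ 1 * χ 1 * a + ψ 1^2 * χ 1^2 * e) + ψ 0 * (ψ 1 * χ 1 * b' - χ 1^2 * c')
        + χ 0 * (ψ 1 * χ 1 * c' - ψ 1^2 * b') + ψ 0 * χ 0 * (a + ψ 1 * χ 1 * e)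
      = PP 2 * (-ω₁ - SS 2 * α - (χ 0 * b' + (QQ 2 - χ 1^2) * e))
        + QQ 2 * (-ω₂ - SS 2 * β - (ψ 0 * c' - ψ 1^2 * e)) := by
    linear_combination h - SS 2 * hω₃ - hid
  obtain ⟨hN0, hN1, hN2, hN3⟩ := nf_unique
    (add_mem (mul_mem (mul_mem mem_psi1 mem_chi1) ma)
      (mul_mem (mul_mem (pow_mem mem_psi1 2) (pow_mem mem_chi1 2)) me))
    (sub_mem (mul_mem (mul_mem mem_psi1 mem_chi1) mb)
      (mul_mem (pow_mem mem_chi1 2) mc))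
    (sub_mem (mul_mem (mul_mem mem_psi1 mem_chi1) mc)
      (mul_mem (pow_mem mem_psi1 2) mb))
    (add_mem ma (mul_mem (mul_mem mem_psi1 mem_chi1) me)) hnf
  have ha : a = -(ψ 1 * χ 1 * e) := by linear_combination hN3
  have hsy : ψ 1 * b' = χ 1 * c' := by
    have h5 : χ 1 * (ψ 1 * b' - χ 1 * c') = 0 := by linear_combination hN1
    have h6 := (mul_eq_zero.mp h5).resolve_left (X_ne_zero _)
    linear_combination h6
  obtain ⟨k, mk, hb', hc'⟩ := div_pair mb mc hsy
  have hxy : PP 2 * (ω₁ + SS 2 * α + (χ 0 * b' + (QQ 2 - χ 1^2) * e))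
      + QQ 2 * (ω₂ + SS 2 * β + (ψ 0 * c' - ψ 1^2 * e)) = 0 := by
    linear_combination hnf - hN0 - ψ 0 * hN1 - χ 0 * hN2 - ψ 0 * χ 0 * hN3
  obtain ⟨t, ht⟩ := exists_of_P_dvd u_not_dvd_Q v_not_dvd_Q
    (show PP 2 * (-(ω₁ + SS 2 * α + (χ 0 * b' + (QQ 2 - χ 1^2) * e)))
      = QQ 2 * (ω₂ + SS 2 * β + (ψ 0 * c' - ψ 1^2 * e)) by linear_combination -hxy)
  have hx : ω₁ + SS 2 * α + (χ 0 * b' + (QQ 2 - χ 1^2) * e) = -(QQ 2 * t) := by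
    apply mul_left_cancel₀ PP_ne_zero
    linear_combination hxy - QQ 2 * ht
  refine ⟨k, e, C (1/2 : ℂ) * e + t, α, β, mk, me, ?_, ?_, ?_⟩
  · rw [QQ_eq, SS_eq] at hx ⊢
    linear_combination hx - χ 0 * hb' + χ 0^2 * e * hhalf
  · rw [PP_eq, SS_eq] at ht ⊢
    linear_combination ht - ψ 0 * hc' - ψ 1^2 * e * hhalf
  · linear_combination hω₃ + ψ 0 * hb' + χ 0 * hc' + ha
end S7


set_option maxHeartbeats 4000000 in
/-- for `N = 2`, (i) `dω = 0` iff
`ω ∼ b₀₀ + ψ₁b₁₀ + χ₁b₀₁ + (c̃₃(ψ₁χ₂ + χ₁ψ₂) − c̃₁χ₁χ₂ − c̃₂ψ₁ψ₂)b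
     + (c̃₃(ψ₁χ₁ − ψ₂χ₂) − ½c̃₁(χ₁² − χ₂²) − ½c̃₂(ψ₁² − ψ₂²))a₁₁`
with coefficients in `ℂ[ψ₂, χ₂]`; (ii) such a combination is `∼ 0` iff
`b₀₀ = b = a₁₁ = 0` and `ψ₁b₁₀ + χ₁b₀₁ = (ψ₁χ₂ − χ₁ψ₂)(ψ₂d₁₀ − χ₂d₀₁)`
for some `d₁₀, d₀₁ ∈ ℂ[ψ₂, χ₂]`. -/
theorem stmt7 :
    (∀ ω : Om3 2, d3 ω = 0 ↔
      ∃ b00 ∈ coefRing2, ∃ b10 ∈ coefRing2, ∃ b01 ∈ coefRing2,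
      ∃ b ∈ coefRing2, ∃ a11 ∈ coefRing2,
        Equiv3 ω
          ![b00 + ψ 0 * b10 + χ 0 * b01,
            -(χ 0 * χ 1 * b) - C (1/2 : ℂ) * (χ 0 ^ 2 - χ 1 ^ 2) * a11,
            -(ψ 0 * ψ 1 * b) - C (1/2 : ℂ) * (ψ 0 ^ 2 - ψ 1 ^ 2) * a11,
            (ψ 0 * χ 1 + χ 0 * ψ 1) * b + (ψ 0 * χ 0 - ψ 1 * χ 1) * a11,
            0, 0, 0, 0])
    ∧
    (∀ b00 b10 b01 b a11 : R3 2,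
      b00 ∈ coefRing2 → b10 ∈ coefRing2 → b01 ∈ coefRing2 →
      b ∈ coefRing2 → a11 ∈ coefRing2 →
      (Equiv3
        (![b00 + ψ 0 * b10 + χ 0 * b01,
          -(χ 0 * χ 1 * b) - C (1/2 : ℂ) * (χ 0 ^ 2 - χ 1 ^ 2) * a11,
          -(ψ 0 * ψ 1 * b) - C (1/2 : ℂ) * (ψ 0 ^ 2 - ψ 1 ^ 2) * a11,
          (ψ 0 * χ 1 + χ 0 * ψ 1) * b + (ψ 0 * χ 0 - ψ 1 * χ 1) * a11,
          0, 0, 0, 0] : Om3 2) 0 ↔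
      (b00 = 0 ∧ b = 0 ∧ a11 = 0 ∧
        ∃ d10 ∈ coefRing2, ∃ d01 ∈ coefRing2,
          ψ 0 * b10 + χ 0 * b01
            = (ψ 0 * χ 1 - χ 0 * ψ 1) * (ψ 1 * d10 - χ 1 * d01)))) := by
  constructor
  · intro ω
    constructor
    · intro hd
      have h0 : PP 2 * ω 1 + QQ 2 * ω 2 + SS 2 * ω 3 = 0 := congrFun hd 0
      have h2 : PP 2 * ω 4 - SS 2 * ω 6 = 0 := congrFun hd 2
      have h3 : PP 2 * ω 5 + QQ 2 * ω 6 = 0 := congrFun hd 3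
      have h6 : PP 2 * ω 7 = 0 := congrFun hd 6
      have hω7 : ω 7 = 0 := (mul_eq_zero.mp h6).resolve_left S7.PP_ne_zero
      obtain ⟨t7, g4, g5, g6⟩ := S7.comp456_classify h2 h3
      obtain ⟨b, a11, ρ₄, ρ₅, ρ₆, mb, ma11, e1, e2, e3⟩ := S7.comp123_classify h0
      obtain ⟨b00, b10, b01, f11, α, β, m00, m10, m01, m11, h00⟩ := S7.nf_exists (ω 0)
      refine ⟨b00 - ψ 1 * χ 1 * f11,
        sub_mem m00 (mul_mem (mul_mem S7.mem_psi1 S7.mem_chi1) m11),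
        b10, m10, b01, m01, b, mb, a11, ma11,
        ![0, α, β, f11, ρ₄, ρ₅, ρ₆, t7], ?_⟩
      funext i
      fin_cases i
      · show ω 0 - (b00 - ψ 1 * χ 1 * f11 + ψ 0 * b10 + χ 0 * b01)
          = PP 2 * α + QQ 2 * β + SS 2 * f11
        rw [S7.SS_eq]
        linear_combination h00
      · show ω 1 - (-(χ 0 * χ 1 * b) - C (1/2 : ℂ) * (χ 0 ^ 2 - χ 1 ^ 2) * a11)
          = -(QQ 2 * ρ₄) - SS 2 * ρ₅
        linear_combination e1
      · show ω 2 - (-(ψ 0 * ψ 1 * b) - C (1/2 : ℂ) * (ψ 0 ^ 2 - ψ 1 ^ 2) * a11)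
          = PP 2 * ρ₄ - SS 2 * ρ₆
        linear_combination e2
      · show ω 3 - ((ψ 0 * χ 1 + χ 0 * ψ 1) * b + (ψ 0 * χ 0 - ψ 1 * χ 1) * a11)
          = PP 2 * ρ₅ + QQ 2 * ρ₆
        linear_combination e3
      · show ω 4 - 0 = SS 2 * t7
        linear_combination g4
      · show ω 5 - 0 = -(QQ 2 * t7)
        linear_combination g5
      · show ω 6 - 0 = PP 2 * t7
        linear_combination g6
      · show ω 7 - 0 = 0
        rw [hω7, sub_zero]
    · rintro ⟨b00, m00, b10, m10, b01, m01, b, mb, a11, ma11, ρ, hρ⟩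
      have g0 : ω 0 - (b00 + ψ 0 * b10 + χ 0 * b01)
          = PP 2 * ρ 1 + QQ 2 * ρ 2 + SS 2 * ρ 3 := congrFun hρ 0
      have g1 : ω 1 - (-(χ 0 * χ 1 * b) - C (1/2 : ℂ) * (χ 0 ^ 2 - χ 1 ^ 2) * a11)
          = -(QQ 2 * ρ 4) - SS 2 * ρ 5 := congrFun hρ 1
      have g2 : ω 2 - (-(ψ 0 * ψ 1 * b) - C (1/2 : ℂ) * (ψ 0 ^ 2 - ψ 1 ^ 2) * a11)
          = PP 2 * ρ 4 - SS 2 * ρ 6 := congrFun hρ 2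
      have g3 : ω 3 - ((ψ 0 * χ 1 + χ 0 * ψ 1) * b + (ψ 0 * χ 0 - ψ 1 * χ 1) * a11)
          = PP 2 * ρ 5 + QQ 2 * ρ 6 := congrFun hρ 3
      have g4 : ω 4 - 0 = SS 2 * ρ 7 := congrFun hρ 4
      have g5 : ω 5 - 0 = -(QQ 2 * ρ 7) := congrFun hρ 5
      have g6 : ω 6 - 0 = PP 2 * ρ 7 := congrFun hρ 6
      have g7 : ω 7 - 0 = 0 := congrFun hρ 7
      funext i
      fin_cases i
      · show PP 2 * ω 1 + QQ 2 * ω 2 + SS 2 * ω 3 = 0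
        rw [S7.QQ_eq, S7.SS_eq] at g1
        rw [S7.PP_eq, S7.SS_eq] at g2
        rw [S7.PP_eq, S7.QQ_eq] at g3
        rw [S7.PP_eq, S7.QQ_eq, S7.SS_eq]
        linear_combination (ψ 0^2 + ψ 1^2) * g1 + (χ 0^2 + χ 1^2) * g2
          + (ψ 0 * χ 0 + ψ 1 * χ 1) * g3
          - (ψ 0^2 * χ 0^2 - ψ 1^2 * χ 1^2) * a11 * S7.hhalf
      · show -(QQ 2 * ω 4) - SS 2 * ω 5 = 0
        linear_combination (-(QQ 2)) * g4 - SS 2 * g5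
      · show PP 2 * ω 4 - SS 2 * ω 6 = 0
        linear_combination PP 2 * g4 - SS 2 * g6
      · show PP 2 * ω 5 + QQ 2 * ω 6 = 0
        linear_combination PP 2 * g5 + QQ 2 * g6
      · show SS 2 * ω 7 = 0
        linear_combination SS 2 * g7
      · show -(QQ 2 * ω 7) = 0
        linear_combination (-(QQ 2)) * g7
      · show PP 2 * ω 7 = 0
        linear_combination PP 2 * g7
      · show (0 : R3 2) = 0
        rfl
  · intro b00 b10 b01 b a11 m00 m10 m01 mb ma11
    constructor
    · rintro ⟨ρ, hρ⟩
      have g0 : (b00 + ψ 0 * b10 + χ 0 * b01) - 0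
          = PP 2 * ρ 1 + QQ 2 * ρ 2 + SS 2 * ρ 3 := congrFun hρ 0
      have g3 : ((ψ 0 * χ 1 + χ 0 * ψ 1) * b + (ψ 0 * χ 0 - ψ 1 * χ 1) * a11) - 0
          = PP 2 * ρ 5 + QQ 2 * ρ 6 := congrFun hρ 3
      have hnfeq : -(ψ 1 * χ 1 * a11) + ψ 0 * (χ 1 * b) + χ 0 * (ψ 1 * b)
          + ψ 0 * χ 0 * a11 = PP 2 * ρ 5 + QQ 2 * ρ 6 := by linear_combination g3
      obtain ⟨-, hf10, -, hf11⟩ := S7.nf_unique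
        (neg_mem (mul_mem (mul_mem S7.mem_psi1 S7.mem_chi1) ma11))
        (mul_mem S7.mem_chi1 mb) (mul_mem S7.mem_psi1 mb) ma11 hnfeq
      have hb : b = 0 := (mul_eq_zero.mp hf10).resolve_left (X_ne_zero _)
      have g0' : b00 + ψ 0 * b10 + χ 0 * b01
          = PP 2 * ρ 1 + QQ 2 * ρ 2 + SS 2 * ρ 3 := by linear_combination g0
      obtain ⟨hb00, d10, md10, d01, md01, heq⟩ := S7.comp0_classify m00 m10 m01 g0'
      exact ⟨hb00, hb, hf11, d10, md10, d01, md01, heq⟩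
    · rintro ⟨hb00, hb, ha11, d10, md10, d01, md01, heq⟩
      refine ⟨![0, -(χ 0 * d10), -(ψ 0 * d01), ψ 0 * d10 + χ 0 * d01, 0, 0, 0, 0], ?_⟩
      funext i
      fin_cases i
      · show (b00 + ψ 0 * b10 + χ 0 * b01) - 0
          = PP 2 * -(χ 0 * d10) + QQ 2 * -(ψ 0 * d01) + SS 2 * (ψ 0 * d10 + χ 0 * d01)
        rw [S7.PP_eq, S7.QQ_eq, S7.SS_eq]
        linear_combination heq + hb00
      · show (-(χ 0 * χ 1 * b) - C (1/2 : ℂ) * (χ 0 ^ 2 - χ 1 ^ 2) * a11) - 0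
          = -(QQ 2 * 0) - SS 2 * 0
        linear_combination (-(χ 0 * χ 1)) * hb - C (1/2 : ℂ) * (χ 0 ^ 2 - χ 1 ^ 2) * ha11
      · show (-(ψ 0 * ψ 1 * b) - C (1/2 : ℂ) * (ψ 0 ^ 2 - ψ 1 ^ 2) * a11) - 0
          = PP 2 * 0 - SS 2 * 0
        linear_combination (-(ψ 0 * ψ 1)) * hb - C (1/2 : ℂ) * (ψ 0 ^ 2 - ψ 1 ^ 2) * ha11
      · show ((ψ 0 * χ 1 + χ 0 * ψ 1) * b + (ψ 0 * χ 0 - ψ 1 * χ 1) * a11) - 0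
          = PP 2 * 0 + QQ 2 * 0
        linear_combination (ψ 0 * χ 1 + χ 0 * ψ 1) * hb + (ψ 0 * χ 0 - ψ 1 * χ 1) * ha11
      · show (0 : R3 2) - 0 = SS 2 * 0
        ring
      · show (0 : R3 2) - 0 = -(QQ 2 * 0)
        ring
      · show (0 : R3 2) - 0 = PP 2 * 0
        ring
      · show (0 : R3 2) - 0 = 0
        ring
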